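/- Let B be an N×N complex matrix all of whose eigenvalues have real part at least δ > 0. Then for every t ≥ 0, the operator norm of e^{-tB} is bounded by C·(1 + ‖B/δ‖^N)·e^{-δt/2}, where C depends only on N and the chosen norm. -/

import Mathlib

open scoped Matrix

attribute [local instance] Matrix.linftyOpNormedRing Matrix.linftyOpNormedAlgebra

section AuxDevelopment

open scoped InnerProductSpace
open NormedSpace Matrix

attribute [local instance] Matrix.linftyOpNormedAddCommGroup Matrix.linftyOpNormedSpace

set_option linter.unusedSectionVars false
set_option linter.unusedVariables false

namespace ExpAux


variable {m n p q : Type*} [Fintype m] [Fintype n] [Fintype p] [Fintype q]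

lemma rowsum_le (A : Matrix m n ℂ) (i : m) : ∑ j, ‖A i j‖₊ ≤ ‖A‖₊ := by
  rw [Matrix.linfty_opNNNorm_def]
  exact Finset.le_sup (f := fun i => ∑ j, ‖A i j‖₊) (Finset.mem_univ i)

lemma nnnorm_le_of_rows {A : Matrix m n ℂ} {c : NNReal} (h : ∀ i, ∑ j, ‖A i j‖₊ ≤ c) :
    ‖A‖₊ ≤ c := by
  rw [Matrix.linfty_opNNNorm_def]
  exact Finset.sup_le fun i _ => h i

lemma nnnorm_submatrix_eq (A : Matrix m m ℂ) (e : n ≃ m) :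
    ‖A.submatrix e e‖₊ = ‖A‖₊ := by
  apply le_antisymm
  · refine nnnorm_le_of_rows fun i => ?_
    calc ∑ j, ‖A (e i) (e j)‖₊ = ∑ j, ‖A (e i) j‖₊ :=
          Fintype.sum_equiv e _ _ fun _ => rfl
      _ ≤ ‖A‖₊ := rowsum_le _ _
  · refine nnnorm_le_of_rows fun i => ?_
    calc ∑ j, ‖A i j‖₊ = ∑ j, ‖A (e (e.symm i)) (e j)‖₊ := by
          rw [e.apply_symm_apply]
          exact (Fintype.sum_equiv e _ _ fun _ => rfl).symm
      _ ≤ ‖A.submatrix e e‖₊ := rowsum_le (A.submatrix e e) (e.symm i)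

lemma nnnorm_toBlocks₁₂_le (M : Matrix (p ⊕ q) (p ⊕ q) ℂ) : ‖M.toBlocks₁₂‖₊ ≤ ‖M‖₊ := by
  refine nnnorm_le_of_rows fun i => ?_
  calc ∑ j, ‖M (Sum.inl i) (Sum.inr j)‖₊
      ≤ ∑ j : p ⊕ q, ‖M (Sum.inl i) j‖₊ := by
        rw [Fintype.sum_sum_type]; exact le_add_self
    _ ≤ ‖M‖₊ := rowsum_le _ _

lemma nnnorm_toBlocks₂₂_le (M : Matrix (p ⊕ q) (p ⊕ q) ℂ) : ‖M.toBlocks₂₂‖₊ ≤ ‖M‖₊ := by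
  refine nnnorm_le_of_rows fun i => ?_
  calc ∑ j, ‖M (Sum.inr i) (Sum.inr j)‖₊
      ≤ ∑ j : p ⊕ q, ‖M (Sum.inr i) j‖₊ := by
        rw [Fintype.sum_sum_type]; exact le_add_self
    _ ≤ ‖M‖₊ := rowsum_le _ _

lemma nnnorm_fromBlocks_le (A : Matrix p p ℂ) (B : Matrix p q ℂ) (C : Matrix q p ℂ)
    (D : Matrix q q ℂ) :
    ‖Matrix.fromBlocks A B C D‖₊ ≤ ‖A‖₊ + ‖B‖₊ + ‖C‖₊ + ‖D‖₊ := by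
  refine nnnorm_le_of_rows fun i => ?_
  cases i with
  | inl i =>
      rw [Fintype.sum_sum_type]
      calc (∑ j : p, ‖A i j‖₊) + ∑ j : q, ‖B i j‖₊ ≤ ‖A‖₊ + ‖B‖₊ :=
            add_le_add (rowsum_le _ _) (rowsum_le _ _)
        _ ≤ ‖A‖₊ + ‖B‖₊ + ‖C‖₊ + ‖D‖₊ := le_add_right (le_add_right le_rfl)
  | inr i =>
      rw [Fintype.sum_sum_type]
      calc (∑ j : p, ‖C i j‖₊) + ∑ j : q, ‖D i j‖₊ ≤ ‖C‖₊ + ‖D‖₊ :=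
            add_le_add (rowsum_le _ _) (rowsum_le _ _)
        _ ≤ ‖A‖₊ + ‖B‖₊ + ‖C‖₊ + ‖D‖₊ := by
            rw [add_assoc (‖A‖₊ + ‖B‖₊)]
            exact le_add_self

lemma nnnorm_le_card_of_entries {A : Matrix m n ℂ} {c : NNReal}
    (h : ∀ i j, ‖A i j‖₊ ≤ c) : ‖A‖₊ ≤ (Fintype.card n) * c := by
  refine nnnorm_le_of_rows fun i => ?_
  calc ∑ j, ‖A i j‖₊ ≤ ∑ _j : n, c := Finset.sum_le_sum fun j _ => h i j
    _ = (Fintype.card n) * c := by simp [Finset.card_univ, mul_comm]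

section ODE

variable [DecidableEq p] [DecidableEq q]

noncomputable def e22lin : Matrix q q ℂ →ₗ[ℝ] Matrix (p ⊕ q) (p ⊕ q) ℂ :=
  { toFun := fun X => Matrix.fromBlocks 0 0 0 X
    map_add' := by intro X Y; ext (i|i) (j|j) <;> simp [Matrix.fromBlocks]
    map_smul' := by intro c X; ext (i|i) (j|j) <;> simp [Matrix.fromBlocks] }

lemma e22lin_bound (X : Matrix q q ℂ) : ‖e22lin (p := p) X‖ ≤ 1 * ‖X‖ := by
  rw [one_mul, ← coe_nnnorm, ← coe_nnnorm, NNReal.coe_le_coe]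
  calc ‖(e22lin (p := p) X : Matrix (p ⊕ q) (p ⊕ q) ℂ)‖₊
      = ‖Matrix.fromBlocks 0 0 0 X‖₊ := rfl
    _ ≤ ‖(0 : Matrix p p ℂ)‖₊ + ‖(0 : Matrix p q ℂ)‖₊ + ‖(0 : Matrix q p ℂ)‖₊ + ‖X‖₊ :=
        nnnorm_fromBlocks_le _ _ _ _
    _ = ‖X‖₊ := by simp

noncomputable def e22 : Matrix q q ℂ →L[ℝ] Matrix (p ⊕ q) (p ⊕ q) ℂ :=
  LinearMap.mkContinuous (e22lin (p := p)) 1 e22lin_bound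

@[simp] lemma e22_apply (X : Matrix q q ℂ) :
    (e22 (p := p) X) = Matrix.fromBlocks 0 0 0 X := rfl

lemma hasDerivAt_exp_neg (D : Matrix q q ℂ) (t : ℝ) :
    HasDerivAt (fun u : ℝ => exp ((-u) • D)) (-(D * exp ((-t) • D))) t := by
  have h1 : HasDerivAt (fun u : ℝ => exp (u • D)) (D * exp ((-t) • D)) (-t) :=
    hasDerivAt_exp_smul_const' D (-t)
  have h2 : HasDerivAt (fun u : ℝ => -u) (-1 : ℝ) t := (hasDerivAt_id t).neg
  have h3 := HasDerivAt.scomp t h1 h2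
  have : (fun u : ℝ => exp ((-u) • D)) = (fun u : ℝ => exp (u • D)) ∘ Neg.neg := by
    ext u; simp
  rw [this]
  simp at h3 ⊢
  exact h3

variable (a : ℂ) (v : Matrix p q ℂ) (D : Matrix q q ℂ)

noncomputable def Vb : Matrix (p ⊕ q) (p ⊕ q) ℂ := Matrix.fromBlocks 0 v 0 0

noncomputable def integrand (s : ℝ) : Matrix (p ⊕ q) (p ⊕ q) ℂ :=
  Complex.exp (s * a) • (Vb v * Matrix.fromBlocks 0 0 0 (exp ((-s) • D)))

lemma continuous_expD : Continuous fun s : ℝ => exp ((-s) • D) :=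
  exp_continuous.comp (continuous_neg.smul continuous_const)

lemma continuous_integrand : Continuous (integrand a v D) := by
  refine Continuous.smul (f := fun s : ℝ => Complex.exp (s * a)) (g := fun s : ℝ => Vb v * Matrix.fromBlocks 0 0 0 (exp ((-s) • D))) ?_ ?_
  · exact Complex.continuous_exp.comp (Complex.continuous_ofReal.mul continuous_const)
  · have : Continuous fun s : ℝ => (e22 (p := p) (exp ((-s) • D))) :=
      (e22 (p := p)).continuous.comp (continuous_expD D)
    exact continuous_const.mul this

set_option maxHeartbeats 1000000 in
lemma exp_neg_fromBlocks (t : ℝ) :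
    exp ((-t) • (Matrix.fromBlocks (a • 1) v 0 D)) =
      Matrix.fromBlocks (Complex.exp (-(t * a)) • 1) 0 0 (exp ((-t) • D)) -
        Complex.exp (-(t * a)) • ∫ s in (0:ℝ)..t, integrand a v D s := by
  set T : Matrix (p ⊕ q) (p ⊕ q) ℂ := Matrix.fromBlocks (a • 1) v 0 D with hT
  set J : Matrix (p ⊕ q) (p ⊕ q) ℂ := Matrix.fromBlocks 1 0 0 0 with hJ
  set N : ℝ → Matrix (p ⊕ q) (p ⊕ q) ℂ := fun t => ∫ s in (0:ℝ)..t, integrand a v D s with hN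
  set c : ℝ → ℂ := fun t => Complex.exp (-(t * a)) with hc
  set E : ℝ → Matrix q q ℂ := fun t => exp ((-t) • D) with hE
  set M : ℝ → Matrix (p ⊕ q) (p ⊕ q) ℂ :=
    fun t => (c t • J + e22 (E t)) - c t • N t with hM
  have hblock : ∀ u : ℝ, Matrix.fromBlocks (Complex.exp (-(u * a)) • 1) 0 0 (exp ((-u) • D)) =
      c u • J + e22 (E u) := by
    intro u
    rw [hJ, e22_apply, Matrix.fromBlocks_smul]
    ext (i|i) (j|j) <;> simp [Matrix.fromBlocks, hc, hE, neg_smul]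
  have hMeq : ∀ u : ℝ, Matrix.fromBlocks (Complex.exp (-(u * a)) • 1) 0 0 (exp ((-u) • D)) -
      Complex.exp (-(u * a)) • N u = M u := by
    intro u
    rw [hblock u]
  -- derivatives of the pieces
  have hcd : ∀ u : ℝ, HasDerivAt c (-a * c u) u := by
    intro u
    have h1 : HasDerivAt (fun s : ℝ => -((s : ℂ) * a)) (-a) u := by
      have := (Complex.ofRealCLM.hasDerivAt (x := u)).mul_const a
      have h := this.neg
      simp only [Complex.ofRealCLM_apply, Complex.ofReal_one, one_mul] at h
      exact h
    simpa [hc, mul_comm] using h1.cexp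
  have hNd : ∀ u : ℝ, HasDerivAt N (integrand a v D u) u := fun u =>
    ((continuous_integrand a v D).integral_hasStrictDerivAt 0 u).hasDerivAt
  have hEd : ∀ u : ℝ, HasDerivAt E (-(D * E u)) u := fun u => hasDerivAt_exp_neg D u
  -- key algebraic identities
  have hTJ : T * J = a • J := by
    rw [hT, hJ, Matrix.fromBlocks_multiply, Matrix.fromBlocks_smul]
    simp
  have hTVb : T * Vb v = a • Vb v := by
    rw [hT, Vb, Matrix.fromBlocks_multiply, Matrix.fromBlocks_smul]
    simp [Matrix.smul_mul]
  have hTe22 : ∀ X : Matrix q q ℂ, T * e22 X = Vb v * e22 X + e22 (D * X) := by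
    intro X
    simp only [e22_apply, hT, Vb, Matrix.fromBlocks_multiply]
    ext (i|i) (j|j) <;> simp [Matrix.fromBlocks]
  have hTN : ∀ u : ℝ, T * N u = a • N u := by
    intro u
    have hint :=
      (continuous_integrand a v D).intervalIntegrable (μ := MeasureTheory.volume) 0 u
    calc T * N u = (ContinuousLinearMap.mul ℝ (Matrix (p ⊕ q) (p ⊕ q) ℂ) T) (N u) :=
          (ContinuousLinearMap.mul_apply' ℝ (Matrix (p ⊕ q) (p ⊕ q) ℂ) T (N u)).symm
      _ = ∫ s in (0:ℝ)..u,
            (ContinuousLinearMap.mul ℝ (Matrix (p ⊕ q) (p ⊕ q) ℂ) T) (integrand a v D s) :=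
          ((ContinuousLinearMap.mul ℝ (Matrix (p ⊕ q) (p ⊕ q) ℂ) T).intervalIntegral_comp_comm
            hint).symm
      _ = ∫ s in (0:ℝ)..u, a • integrand a v D s := by
          congr 1
          funext s
          rw [ContinuousLinearMap.mul_apply' ℝ (Matrix (p ⊕ q) (p ⊕ q) ℂ) T]
          rw [integrand, mul_smul_comm, ← mul_assoc, hTVb, Matrix.smul_mul, smul_comm]
      _ = a • N u := intervalIntegral.integral_smul a _
  -- derivative of M
  have hMd : ∀ u : ℝ, HasDerivAt M
      (((-a * c u) • J + e22 (-(D * E u))) - (c u • integrand a v D u + (-a * c u) • N u)) u := by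
    intro u
    have he22d := ((e22 (p := p) (q := q)).hasFDerivAt).comp_hasDerivAt u (hEd u)
    have he22d' : HasDerivAt (fun s : ℝ => e22 (p := p) (E s)) (e22 (-(D * E u))) u := he22d
    exact (((hcd u).smul_const J).add he22d').sub ((hcd u).smul (hNd u))
  -- M satisfies M' = -(T * M)
  have key : ∀ u : ℝ, T * M u +
      (((-a * c u) • J + e22 (-(D * E u))) - (c u • integrand a v D u + (-a * c u) • N u)) = 0 := by
    intro u
    have hcf : c u • integrand a v D u = Vb v * e22 (E u) := by
      rw [integrand, smul_smul, hc]
      rw [← Complex.exp_add]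
      simp [hE]
    have hTM : T * M u = (c u * a) • J + (Vb v * e22 (E u) + e22 (D * E u)) - (c u * a) • N u := by
      rw [hM]
      simp only [mul_sub, mul_add]
      rw [mul_smul_comm, hTJ, mul_smul_comm, hTN, hTe22, smul_smul, smul_smul]
    rw [hTM, hcf]
    simp only [neg_mul, neg_smul, map_neg, mul_comm a (c u)]
    abel
  -- the function exp(u•T) * M u is constant, equal to 1
  have hPd : ∀ u : ℝ, HasDerivAt (fun s : ℝ => exp (s • T)) (exp (u • T) * T) u := by
    intro u
    have := hasDerivAt_exp_smul_const (𝕂 := ℝ) T u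
    exact this
  have hconst : ∀ u : ℝ, exp (u • T) * M u = 1 := by
    have hder : ∀ u : ℝ, HasDerivAt (fun s => exp (s • T) * M s) 0 u := by
      intro u
      have h := (hPd u).mul (hMd u)
      have heq : exp (u • T) * T * M u +
          exp (u • T) * (((-a * c u) • J + e22 (-(D * E u))) -
            (c u • integrand a v D u + (-a * c u) • N u)) = 0 := by
        rw [mul_assoc, ← mul_add, key u, mul_zero]
      rwa [heq] at h
    have hdiff : Differentiable ℝ (fun s => exp (s • T) * M s) := fun u =>
      (hder u).differentiableAt
    intro u
    have h0 := is_const_of_deriv_eq_zero hdiff (fun x => (hder x).deriv) u 0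
    rw [h0]
    have hN0 : N 0 = 0 := intervalIntegral.integral_same
    have hM0 : M 0 = 1 := by
      rw [hM]
      simp only [hN0, smul_zero, sub_zero, hc, hE, e22_apply]
      norm_num
      rw [hJ]
      ext (i|i) (j|j) <;> simp [Matrix.fromBlocks, Matrix.one_apply]
    rw [hM0]
    simp [exp_zero]
  have hPinv : exp ((-t) • T) * exp (t • T) = 1 := by
    erw [← NormedSpace.exp_add_of_commute (((Commute.refl T).smul_left (-t)).smul_right t)]
    rw [show (-t) • T + t • T = 0 by rw [neg_smul]; abel]
    exact NormedSpace.exp_zero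
  calc exp ((-t) • T) = exp ((-t) • T) * (exp (t • T) * M t) := by
        rw [hconst t, mul_one]
    _ = (exp ((-t) • T) * exp (t • T)) * M t := by rw [mul_assoc]
    _ = M t := by rw [hPinv, one_mul]
    _ = _ := (hMeq t).symm

end ODE


section Spectral


variable {ι : Type} [Fintype ι] [DecidableEq ι]

lemma euclidean_entry_le (y : EuclideanSpace ℂ ι) (i : ι) : ‖y i‖ ≤ ‖y‖ := by
  rw [EuclideanSpace.norm_eq]
  have h1 : ‖y i‖ = Real.sqrt (‖y i‖ ^ 2) := by
    rw [Real.sqrt_sq (norm_nonneg _)]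
  rw [h1]
  apply Real.sqrt_le_sqrt
  exact Finset.single_le_sum (f := fun j => ‖y j‖ ^ 2)
    (fun j _ => sq_nonneg _) (Finset.mem_univ i)

lemma exists_eigen [Nonempty ι] (B : Matrix ι ι ℂ) :
    ∃ (lam : ℂ) (x : ι → ℂ), lam ∈ spectrum ℂ B ∧ x ≠ 0 ∧ B *ᵥ x = lam • x := by
  obtain ⟨lam, hlam⟩ := spectrum.nonempty B
  refine ⟨lam, ?_⟩
  rw [spectrum.mem_iff] at hlam
  rw [Matrix.isUnit_iff_isUnit_det, isUnit_iff_ne_zero, not_not] at hlam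
  obtain ⟨x, hx0, hx⟩ := (Matrix.exists_mulVec_eq_zero_iff).mpr hlam
  refine ⟨x, spectrum.mem_iff.mpr ?_, hx0, ?_⟩
  · rw [Matrix.isUnit_iff_isUnit_det, isUnit_iff_ne_zero, not_not]
    exact hlam
  · have h1 : (algebraMap ℂ (Matrix ι ι ℂ) lam - B) *ᵥ x = lam • x - B *ᵥ x := by
      rw [Matrix.sub_mulVec]
      congr 1
      rw [Matrix.algebraMap_eq_diagonal]
      ext i
      simp [Matrix.mulVec_diagonal]
    rw [h1] at hx
    have := sub_eq_zero.mp hx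
    exact this.symm

lemma exists_unitary_conj [Nonempty ι] (i₀ : ι) (B : Matrix ι ι ℂ) :
    ∃ (U : Matrix ι ι ℂ) (lam : ℂ), lam ∈ spectrum ℂ B ∧
      Uᴴ * U = 1 ∧ U * Uᴴ = 1 ∧
      (∀ i j, ‖U i j‖ ≤ 1) ∧ (∀ i j, ‖Uᴴ i j‖ ≤ 1) ∧
      (∀ i, (Uᴴ * B * U) i i₀ = if i = i₀ then lam else 0) := by
  obtain ⟨lam, x, hmem, hx0, hBx⟩ := exists_eigen B
  -- normalized eigenvector in EuclideanSpace
  set y : EuclideanSpace ℂ ι := (WithLp.equiv 2 (ι → ℂ)).symm x with hy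
  have hy0 : y ≠ 0 := by
    simpa [hy] using hx0
  have hyn : ‖y‖ ≠ 0 := norm_ne_zero_iff.mpr hy0
  set x₀ : EuclideanSpace ℂ ι := (‖y‖⁻¹ : ℂ) • y with hx₀
  have hx₀norm : ‖x₀‖ = 1 := by
    rw [hx₀, norm_smul]
    simp [norm_inv, hyn]
  have hx₀eig : B *ᵥ (fun k => x₀ k) = lam • (fun k => x₀ k) := by
    have : (fun k => x₀ k) = (‖y‖⁻¹ : ℂ) • x := rfl
    rw [this, Matrix.mulVec_smul, hBx, smul_comm]
  -- orthonormal basis extension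
  have hcard : Module.finrank ℂ (EuclideanSpace ℂ ι) = Fintype.card ι :=
    finrank_euclideanSpace
  have horth : Orthonormal ℂ (({i₀} : Set ι).restrict (fun _ => x₀)) := by
    constructor
    · intro i
      exact hx₀norm
    · intro i j hij
      exact absurd (Subsingleton.elim i j) hij
  obtain ⟨b, hb⟩ := horth.exists_orthonormalBasis_extension_of_card_eq hcard
  have hbi₀ : b i₀ = x₀ := hb i₀ rfl
  set U : Matrix ι ι ℂ := fun i j => b j i with hU
  have hinner : ∀ i j, ⟪b i, b j⟫_ℂ = if i = j then 1 else 0 :=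
    orthonormal_iff_ite.mp b.orthonormal
  have hUU : Uᴴ * U = 1 := by
    ext i j
    rw [Matrix.mul_apply, Matrix.one_apply]
    have := hinner i j
    rw [PiLp.inner_apply] at this
    simp only [Matrix.conjTranspose_apply]
    simpa [hU, mul_comm] using this
  have hUU' : U * Uᴴ = 1 := mul_eq_one_comm.mp hUU
  have hUent : ∀ i j, ‖U i j‖ ≤ 1 := by
    intro i j
    calc ‖U i j‖ = ‖b j i‖ := rfl
      _ ≤ ‖b j‖ := euclidean_entry_le _ _
      _ = 1 := b.orthonormal.1 j
  have hUHent : ∀ i j, ‖Uᴴ i j‖ ≤ 1 := by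
    intro i j
    rw [Matrix.conjTranspose_apply]
    simpa using hUent j i
  refine ⟨U, lam, hmem, hUU, hUU', hUent, hUHent, ?_⟩
  intro i
  have hcol : ∀ k, U k i₀ = x₀ k := by
    intro k
    rw [hU]
    simp [hbi₀]
  have hBU : ∀ k, (B * U) k i₀ = lam * x₀ k := by
    intro k
    rw [Matrix.mul_apply]
    have : ∑ j, B k j * U j i₀ = (B *ᵥ (fun k => x₀ k)) k := by
      rw [Matrix.mulVec]
      simp only [dotProduct, hcol]
    rw [this, hx₀eig]
    simp
  rw [Matrix.mul_assoc, Matrix.mul_apply]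
  have h1 : ∑ j, (Uᴴ) i j * (B * U) j i₀ = lam * ∑ j, (starRingEnd ℂ) (b i j) * x₀ j := by
    rw [Finset.mul_sum]
    congr 1
    ext j
    rw [Matrix.conjTranspose_apply, hBU]
    simp [hU]
    ring
  rw [h1]
  have h2 : ∑ j, (starRingEnd ℂ) (b i j) * x₀ j = ⟪b i, b i₀⟫_ℂ := by
    rw [PiLp.inner_apply, hbi₀]
    simp [RCLike.inner_apply, mul_comm]
  rw [h2, hinner i i₀]
  by_cases h : i = i₀ <;> simp [h]

end Spectral

section Transfer


variable {ι κ : Type} [Fintype ι] [DecidableEq ι] [Fintype κ] [DecidableEq κ]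

lemma norm_submatrix_eq (A : Matrix ι ι ℂ) (e : κ ≃ ι) :
    ‖A.submatrix e e‖ = ‖A‖ := congr_arg NNReal.toReal (nnnorm_submatrix_eq A e)

lemma continuous_reindex (e : ι ≃ κ) :
    Continuous ⇑(Matrix.reindexAlgEquiv ℂ ℂ e) := by
  refine AddMonoidHomClass.continuous_of_bound _ 1 fun A => ?_
  rw [one_mul]
  have : (Matrix.reindexAlgEquiv ℂ ℂ e) A = A.submatrix e.symm e.symm := by
    simp [Matrix.reindexAlgEquiv_apply, Matrix.reindex_apply]
  rw [this, norm_submatrix_eq A e.symm]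

lemma exp_submatrix (e : κ ≃ ι) (A : Matrix ι ι ℂ) :
    exp (A.submatrix e e) = (exp A).submatrix e e := by
  have h := map_exp (Matrix.reindexAlgEquiv ℂ ℂ e.symm)
    (continuous_reindex e.symm) A
  have happ : ∀ M : Matrix ι ι ℂ, (Matrix.reindexAlgEquiv ℂ ℂ e.symm) M = M.submatrix e e := by
    intro M
    simp [Matrix.reindexAlgEquiv_apply, Matrix.reindex_apply]
  rw [happ, happ] at h
  exact h.symm

lemma spectrum_submatrix (e : κ ≃ ι) (A : Matrix ι ι ℂ) :
    spectrum ℂ (A.submatrix e e) = spectrum ℂ A := by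
  have happ : (Matrix.reindexAlgEquiv ℂ ℂ e.symm) A = A.submatrix e e := by
    simp [Matrix.reindexAlgEquiv_apply, Matrix.reindex_apply]
  rw [← happ]
  exact AlgEquiv.spectrum_eq (Matrix.reindexAlgEquiv ℂ ℂ e.symm) A

lemma norm_one_matrix [Nonempty ι] : ‖(1 : Matrix ι ι ℂ)‖ = 1 := by
  rw [← Matrix.diagonal_one, Matrix.linfty_opNorm_diagonal]
  have h : ‖(fun _ : ι => (1:ℂ))‖₊ = 1 := by
    rw [Pi.nnnorm_def]
    simp [Finset.sup_const Finset.univ_nonempty]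
  calc ‖(fun _ : ι => (1:ℂ))‖ = ((‖(fun _ : ι => (1:ℂ))‖₊ : NNReal) : ℝ) := rfl
    _ = 1 := by rw [h]; simp

-- spectrum inclusion for lower-right block of block triangular
lemma spectrum_toBlock_subset {p q : Type} [Fintype p] [DecidableEq p] [Fintype q] [DecidableEq q]
    (A : Matrix p p ℂ) (v : Matrix p q ℂ) (D : Matrix q q ℂ) :
    spectrum ℂ D ⊆ spectrum ℂ (Matrix.fromBlocks A v 0 D) := by
  intro z hz
  rw [spectrum.mem_iff] at hz ⊢
  intro hU
  apply hz
  rw [Matrix.isUnit_iff_isUnit_det, isUnit_iff_ne_zero] at hU ⊢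
  intro hdet
  apply hU
  have halg : (algebraMap ℂ (Matrix (p ⊕ q) (p ⊕ q) ℂ)) z - Matrix.fromBlocks A v 0 D =
      Matrix.fromBlocks ((algebraMap ℂ (Matrix p p ℂ)) z - A) (-v) 0
        ((algebraMap ℂ (Matrix q q ℂ)) z - D) := by
    rw [Matrix.algebraMap_eq_diagonal, Matrix.algebraMap_eq_diagonal,
      Matrix.algebraMap_eq_diagonal]
    ext (i|i) (j|j) <;>
      simp [Matrix.fromBlocks, Matrix.diagonal, Pi.algebraMap_apply, Sum.inl.injEq] <;>
      aesop
  rw [halg, Matrix.det_fromBlocks_zero₂₁, hdet, mul_zero]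

-- the scalar integral estimate
lemma integral_bound (c δ K V : ℝ) (hδ : 0 < δ) (hc : δ ≤ c) (hK : 0 ≤ K) (hV : 0 ≤ V)
    (t : ℝ) (ht : 0 ≤ t) :
    Real.exp (-(t * c)) * ∫ s in (0:ℝ)..t, V * Real.exp (s * c) * (K * Real.exp (-δ * s / 2)) ≤
      2 / δ * V * K * Real.exp (-δ * t / 2) := by
  have hpos : 0 < c - δ / 2 := by linarith
  have hint : (fun s => V * Real.exp (s * c) * (K * Real.exp (-δ * s / 2))) =
      fun s => (V * K) * Real.exp (s * (c - δ / 2)) := by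
    funext s
    rw [show s * (c - δ/2) = s * c + (-δ * s / 2) by ring, Real.exp_add]
    ring
  rw [hint, intervalIntegral.integral_const_mul]
  have hI : ∫ s in (0:ℝ)..t, Real.exp (s * (c - δ / 2)) =
      (c - δ / 2)⁻¹ * (Real.exp (t * (c - δ / 2)) - 1) := by
    rw [intervalIntegral.integral_comp_mul_right Real.exp (ne_of_gt hpos)]
    rw [integral_exp]
    simp [smul_eq_mul]
  rw [hI]
  have h1 : Real.exp (-(t * c)) * (V * K * ((c - δ / 2)⁻¹ * (Real.exp (t * (c - δ / 2)) - 1))) ≤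
      Real.exp (-(t * c)) * (V * K * ((c - δ / 2)⁻¹ * Real.exp (t * (c - δ / 2)))) := by
    apply mul_le_mul_of_nonneg_left _ (Real.exp_nonneg _)
    apply mul_le_mul_of_nonneg_left _ (by positivity)
    apply mul_le_mul_of_nonneg_left _ (by positivity)
    linarith
  refine h1.trans ?_
  have h2 : Real.exp (-(t * c)) * Real.exp (t * (c - δ / 2)) = Real.exp (-δ * t / 2) := by
    rw [← Real.exp_add]
    congr 1
    ring
  have h3 : (c - δ / 2)⁻¹ ≤ 2 / δ := by
    have hle : (c - δ / 2)⁻¹ ≤ (δ / 2)⁻¹ := by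
      apply inv_anti₀ (by linarith) (by linarith)
    calc (c - δ / 2)⁻¹ ≤ (δ/2)⁻¹ := hle
      _ = 2 / δ := by rw [inv_div]
  calc Real.exp (-(t * c)) * (V * K * ((c - δ / 2)⁻¹ * Real.exp (t * (c - δ / 2))))
      = (V * K * (c - δ / 2)⁻¹) * (Real.exp (-(t * c)) * Real.exp (t * (c - δ / 2))) := by ring
    _ = (V * K * (c - δ / 2)⁻¹) * Real.exp (-δ * t / 2) := by rw [h2]
    _ ≤ (V * K * (2 / δ)) * Real.exp (-δ * t / 2) := by
        apply mul_le_mul_of_nonneg_right _ (Real.exp_nonneg _)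
        apply mul_le_mul_of_nonneg_left h3 (by positivity)
    _ = 2 / δ * V * K * Real.exp (-δ * t / 2) := by ring


end Transfer

section RealNorm

variable {m n p q : Type*} [Fintype m] [Fintype n] [Fintype p] [Fintype q]

lemma norm_fromBlocks_le (A : Matrix p p ℂ) (B : Matrix p q ℂ) (C : Matrix q p ℂ)
    (D : Matrix q q ℂ) :
    ‖Matrix.fromBlocks A B C D‖ ≤ ‖A‖ + ‖B‖ + ‖C‖ + ‖D‖ := by
  have h := nnnorm_fromBlocks_le A B C D
  exact_mod_cast h

lemma norm_toBlocks₁₂_le (M : Matrix (p ⊕ q) (p ⊕ q) ℂ) : ‖M.toBlocks₁₂‖ ≤ ‖M‖ := by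
  exact_mod_cast nnnorm_toBlocks₁₂_le M

lemma norm_toBlocks₂₂_le (M : Matrix (p ⊕ q) (p ⊕ q) ℂ) : ‖M.toBlocks₂₂‖ ≤ ‖M‖ := by
  exact_mod_cast nnnorm_toBlocks₂₂_le M

lemma norm_le_card_of_entries {A : Matrix m n ℂ} (h : ∀ i j, ‖A i j‖ ≤ 1) :
    ‖A‖ ≤ (Fintype.card n : ℝ) := by
  have h' : ∀ i j, ‖A i j‖₊ ≤ 1 := fun i j => h i j
  have := nnnorm_le_card_of_entries h'
  calc ‖A‖ = ((‖A‖₊ : NNReal) : ℝ) := rfl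
    _ ≤ (((Fintype.card n : NNReal) * 1 : NNReal) : ℝ) := by exact_mod_cast this
    _ = (Fintype.card n : ℝ) := by simp

lemma pow_le_one_add_pow {x : ℝ} (hx : 0 ≤ x) {k n : ℕ} (hk : k ≤ n) : x ^ k ≤ 1 + x ^ n := by
  rcases le_total x 1 with h | h
  · have h1 : x ^ k ≤ 1 := pow_le_one₀ hx h
    nlinarith [pow_nonneg hx n]
  · have h1 : x ^ k ≤ x ^ n := pow_le_pow_right₀ h hk
    nlinarith

end RealNorm

set_option maxHeartbeats 2000000 in
theorem mainInd : ∀ n : ℕ, ∀ (ι : Type) (_ : Fintype ι) (_ : DecidableEq ι),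
    Fintype.card ι = n →
    ∃ C : ℝ, 0 < C ∧ ∀ (δ : ℝ), 0 < δ → ∀ B : Matrix ι ι ℂ,
      (∀ z ∈ spectrum ℂ B, δ ≤ z.re) → ∀ t : ℝ, 0 ≤ t →
        ‖exp ((-t) • B)‖ ≤ C * (1 + ‖δ⁻¹ • B‖ ^ n) * Real.exp (-δ * t / 2) := by
  intro n
  induction n with
  | zero =>
      intro ι _ _ hcard
      refine ⟨1, one_pos, ?_⟩
      intro δ hδ B hspec t ht
      haveI : IsEmpty ι := Fintype.card_eq_zero_iff.mp hcard
      have h0 : ‖exp ((-t) • B)‖ = 0 := by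
        have h1 : ‖exp ((-t) • B)‖₊ ≤ 0 := nnnorm_le_of_rows fun i => (IsEmpty.false i).elim
        have h2 : ‖exp ((-t) • B)‖ ≤ 0 := by exact_mod_cast h1
        linarith [norm_nonneg (exp ((-t) • B))]
      rw [h0]
      positivity
  | succ n IH =>
      intro ι _ _ hcard
      haveI : Nonempty ι := Fintype.card_pos_iff.mp (by omega)
      set i₀ : ι := Classical.arbitrary ι with hi₀
      haveI huniq : Unique {i : ι // i = i₀} := ⟨⟨⟨i₀, rfl⟩⟩, fun a => Subtype.ext a.prop⟩
      have hκ : Fintype.card {i : ι // ¬ i = i₀} = n := by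
        have h1 : Fintype.card {i : ι // i = i₀} = 1 := Fintype.card_subtype_eq i₀
        have h2 := Fintype.card_subtype_compl (fun i : ι => i = i₀)
        rw [h1, hcard] at h2
        omega
      obtain ⟨C', hC'pos, hIH⟩ := IH {i : ι // ¬ i = i₀} inferInstance inferInstance hκ
      set a : ℝ := (n : ℝ) + 1 with ha
      have ha1 : (1 : ℝ) ≤ a := by simp [ha]
      have hcard' : (Fintype.card ι : ℝ) = a := by rw [hcard]; push_cast [ha]; ring
      refine ⟨a ^ 2 * (1 + 6 * C') * (a ^ 2) ^ (n + 1), by positivity, ?_⟩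
      intro δ hδ B hspec t ht
      -- unitary conjugation
      obtain ⟨U, lam, hlam, hUU, hUU', hUent, hUHent, hTcol⟩ := exists_unitary_conj i₀ B
      set T : Matrix ι ι ℂ := Uᴴ * B * U with hT
      set u : (Matrix ι ι ℂ)ˣ := ⟨U, Uᴴ, hUU', hUU⟩ with hu
      have hspecT : spectrum ℂ T = spectrum ℂ B := by
        have h := spectrum.units_conjugate' (R := ℂ) (a := B) (u := u)
        exact h
      -- exp conjugation
      have hsmulT : (-t) • T = Uᴴ * ((-t) • B) * U := by
        rw [hT, mul_smul_comm, smul_mul_assoc]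
      have hconjexp : exp ((-t) • T) = Uᴴ * exp ((-t) • B) * U := by
        rw [hsmulT]
        exact NormedSpace.exp_units_conj' u ((-t) • B)
      have hBexp : exp ((-t) • B) = U * exp ((-t) • T) * Uᴴ := by
        rw [hconjexp]
        calc exp ((-t) • B) = 1 * exp ((-t) • B) * 1 := by rw [one_mul, mul_one]
          _ = (U * Uᴴ) * exp ((-t) • B) * (U * Uᴴ) := by rw [hUU']
          _ = U * (Uᴴ * exp ((-t) • B) * U) * Uᴴ := by
              simp only [Matrix.mul_assoc]
      -- block form via reindexing
      set e : ({i : ι // i = i₀} ⊕ {i : ι // ¬ i = i₀}) ≃ ι := Equiv.sumCompl (· = i₀) with he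
      set S := T.submatrix e e with hS
      have hspecS : spectrum ℂ S = spectrum ℂ B := by
        rw [hS, spectrum_submatrix, hspecT]
      have hsmulS : ∀ r : ℝ, (r • T).submatrix e e = r • S := by
        intro r
        ext i j
        simp [hS, Matrix.submatrix_apply]
      have hSexp : exp ((-t) • S) = (exp ((-t) • T)).submatrix e e := by
        rw [← hsmulS, exp_submatrix]
      have hnormexpTS : ‖exp ((-t) • T)‖ = ‖exp ((-t) • S)‖ := by
        rw [hSexp, norm_submatrix_eq]
      -- blocks of S
      set v' := S.toBlocks₁₂ with hv'
      set D := S.toBlocks₂₂ with hD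
      have hS21 : S.toBlocks₂₁ = 0 := by
        ext i j
        show T (e (Sum.inr i)) (e (Sum.inl j)) = 0
        have hj : (e (Sum.inl j) : ι) = i₀ := j.prop
        have hi : (e (Sum.inr i) : ι) = (i : ι) := rfl
        rw [hj, hi, hTcol]
        exact if_neg i.prop
      have hS11 : S.toBlocks₁₁ = lam • (1 : Matrix {i : ι // i = i₀} {i : ι // i = i₀} ℂ) := by
        ext i j
        show T (e (Sum.inl i)) (e (Sum.inl j)) = (lam • (1 : Matrix _ _ ℂ)) i j
        have hj : (e (Sum.inl j) : ι) = i₀ := j.prop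
        have hi : (e (Sum.inl i) : ι) = i₀ := i.prop
        rw [hj, hi, hTcol, if_pos rfl]
        have hij : i = j := Subsingleton.elim i j
        subst hij
        simp [Matrix.one_apply]
      have hSblocks : S = Matrix.fromBlocks (lam • 1) v' 0 D := by
        conv_lhs => rw [← Matrix.fromBlocks_toBlocks S]
        rw [hS11, hS21]
      -- spectra of blocks
      have hlamre : δ ≤ lam.re := hspec lam hlam
      have hspecD : ∀ z ∈ spectrum ℂ D, δ ≤ z.re := by
        intro z hz
        apply hspec
        rw [← hspecS, hSblocks]
        exact spectrum_toBlock_subset _ _ _ hz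
      -- IH bound for D
      set K : ℝ := C' * (1 + ‖δ⁻¹ • D‖ ^ n) with hK
      have hKpos : 0 < K := by
        rw [hK]; positivity
      have hDbound : ∀ s : ℝ, 0 ≤ s → ‖exp ((-s) • D)‖ ≤ K * Real.exp (-δ * s / 2) :=
        fun s hs => hIH δ hδ D hspecD s hs
      -- exponential formula
      have hform := exp_neg_fromBlocks lam v' D t
      rw [← hSblocks] at hform
      -- norm estimates
      have hexpt : ‖Complex.exp (-(↑t * lam))‖ ≤ Real.exp (-δ * t / 2) := by
        rw [Complex.norm_exp]
        apply Real.exp_le_exp.mpr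
        have : (-(↑t * lam) : ℂ).re = -(t * lam.re) := by
          simp [Complex.mul_re]
        rw [this]
        nlinarith
      have hexpt' : ‖Complex.exp (-(↑t * lam))‖ = Real.exp (-(t * lam.re)) := by
        rw [Complex.norm_exp]
        congr 1
        simp [Complex.mul_re]
      -- first block norm
      have hone : ‖(1 : Matrix {i : ι // i = i₀} {i : ι // i = i₀} ℂ)‖ = 1 := norm_one_matrix
      have hblock1 : ‖Matrix.fromBlocks
          (Complex.exp (-(↑t * lam)) • (1 : Matrix {i : ι // i = i₀} {i : ι // i = i₀} ℂ))
          0 0 (exp ((-t) • D))‖ ≤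
          Real.exp (-δ * t / 2) + K * Real.exp (-δ * t / 2) := by
        refine (norm_fromBlocks_le _ _ _ _).trans ?_
        simp only [norm_zero, add_zero, zero_add]
        gcongr
        · calc ‖Complex.exp (-(↑t * lam)) • (1 : Matrix {i : ι // i = i₀} {i : ι // i = i₀} ℂ)‖
              = ‖Complex.exp (-(↑t * lam))‖ * 1 := by rw [norm_smul, hone]
            _ ≤ Real.exp (-δ * t / 2) := by rw [mul_one]; exact hexpt
        · exact hDbound t ht
      -- integral norm estimate
      have hVb : ∀ s : ℝ, ‖integrand lam v' D s‖ ≤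
          ‖v'‖ * Real.exp (s * lam.re) * (K * Real.exp (-δ * s / 2)) → True := fun _ _ => trivial
      have hintnorm : ∀ s ∈ Set.Icc (0:ℝ) t, ‖integrand lam v' D s‖ ≤
          ‖v'‖ * Real.exp (s * lam.re) * (K * Real.exp (-δ * s / 2)) := by
        intro s hs
        rw [integrand, norm_smul]
        have h1 : ‖Complex.exp (↑s * lam)‖ = Real.exp (s * lam.re) := by
          rw [Complex.norm_exp]
          congr 1
          simp [Complex.mul_re]
        have h2 : ‖Vb v' * Matrix.fromBlocks 0 0 0 (exp ((-s) • D))‖ ≤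
            ‖v'‖ * (K * Real.exp (-δ * s / 2)) := by
          refine (norm_mul_le _ _).trans ?_
          have hVbn : ‖Vb v'‖ ≤ ‖v'‖ := by
            rw [Vb]
            refine (norm_fromBlocks_le _ _ _ _).trans ?_
            simp
          have hFn : ‖(Matrix.fromBlocks 0 0 0 (exp ((-s) • D)) :
              Matrix ({i : ι // i = i₀} ⊕ {i : ι // ¬ i = i₀})
                ({i : ι // i = i₀} ⊕ {i : ι // ¬ i = i₀}) ℂ)‖ ≤ K * Real.exp (-δ * s / 2) := by
            refine (norm_fromBlocks_le _ _ _ _).trans ?_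
            simpa using hDbound s hs.1
          exact mul_le_mul hVbn hFn (norm_nonneg _) (norm_nonneg _)
        calc ‖Complex.exp (↑s * lam)‖ * ‖Vb v' * Matrix.fromBlocks 0 0 0 (exp ((-s) • D))‖
            ≤ Real.exp (s * lam.re) * (‖v'‖ * (K * Real.exp (-δ * s / 2))) := by
              rw [h1]
              exact mul_le_mul_of_nonneg_left h2 (Real.exp_nonneg _)
          _ = ‖v'‖ * Real.exp (s * lam.re) * (K * Real.exp (-δ * s / 2)) := by ring
      have hintegrable1 : IntervalIntegrable (fun s => ‖integrand lam v' D s‖)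
          MeasureTheory.volume 0 t :=
        ((continuous_integrand lam v' D).norm).intervalIntegrable 0 t
      have hintegrable2 : IntervalIntegrable
          (fun s => ‖v'‖ * Real.exp (s * lam.re) * (K * Real.exp (-δ * s / 2)))
          MeasureTheory.volume 0 t := by
        apply Continuous.intervalIntegrable
        have c1 : Continuous fun s : ℝ => Real.exp (s * lam.re) :=
          Real.continuous_exp.comp (continuous_id.mul continuous_const)
        have c2 : Continuous fun s : ℝ => Real.exp (-δ * s / 2) :=
          Real.continuous_exp.comp ((continuous_const.mul continuous_id).div_const 2)
        exact (continuous_const.mul c1).mul (continuous_const.mul c2)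
      have hw : ‖Complex.exp (-(↑t * lam)) • ∫ s in (0:ℝ)..t, integrand lam v' D s‖ ≤
          2 / δ * ‖v'‖ * K * Real.exp (-δ * t / 2) := by
        rw [norm_smul, hexpt']
        have h1 : ‖∫ s in (0:ℝ)..t, integrand lam v' D s‖ ≤
            ∫ s in (0:ℝ)..t, ‖v'‖ * Real.exp (s * lam.re) * (K * Real.exp (-δ * s / 2)) := by
          refine (intervalIntegral.norm_integral_le_integral_norm ht).trans ?_
          exact intervalIntegral.integral_mono_on ht hintegrable1 hintegrable2 hintnorm
        calc Real.exp (-(t * lam.re)) * ‖∫ s in (0:ℝ)..t, integrand lam v' D s‖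
            ≤ Real.exp (-(t * lam.re)) *
              ∫ s in (0:ℝ)..t, ‖v'‖ * Real.exp (s * lam.re) * (K * Real.exp (-δ * s / 2)) :=
              mul_le_mul_of_nonneg_left h1 (Real.exp_nonneg _)
          _ ≤ 2 / δ * ‖v'‖ * K * Real.exp (-δ * t / 2) :=
              integral_bound lam.re δ K ‖v'‖ hδ hlamre (le_of_lt hKpos) (norm_nonneg _) t ht
      -- combine into bound for exp(-t S)
      have hSnorm : ‖exp ((-t) • S)‖ ≤
          (1 + K + 2 / δ * ‖v'‖ * K) * Real.exp (-δ * t / 2) := by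
        rw [hform]
        refine (norm_sub_le _ _).trans ?_
        refine (add_le_add hblock1 hw).trans (le_of_eq ?_)
        ring
      -- norms of U, Uᴴ
      have hUnorm : ‖U‖ ≤ a := by
        rw [← hcard']
        exact norm_le_card_of_entries hUent
      have hUHnorm : ‖Uᴴ‖ ≤ a := by
        rw [← hcard']
        exact norm_le_card_of_entries hUHent
      -- relation between X and Y
      set X : ℝ := ‖δ⁻¹ • S‖ with hX
      set Y : ℝ := ‖δ⁻¹ • B‖ with hY
      have hXnn : 0 ≤ X := norm_nonneg _
      have hYnn : 0 ≤ Y := norm_nonneg _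
      have hsmulsub : (δ⁻¹ • T).submatrix e e = δ⁻¹ • S := by
        ext i j
        simp [hS, Matrix.submatrix_apply]
      have hXT : X = ‖δ⁻¹ • T‖ := by
        rw [hX, ← hsmulsub, norm_submatrix_eq]
      have hXY : X ≤ a ^ 2 * Y := by
        have h1 : δ⁻¹ • T = Uᴴ * (δ⁻¹ • B) * U := by
          rw [hT, mul_smul_comm, smul_mul_assoc]
        rw [hXT, h1]
        calc ‖Uᴴ * (δ⁻¹ • B) * U‖ ≤ ‖Uᴴ * (δ⁻¹ • B)‖ * ‖U‖ := norm_mul_le _ _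
          _ ≤ ‖Uᴴ‖ * ‖δ⁻¹ • B‖ * ‖U‖ :=
              mul_le_mul_of_nonneg_right (norm_mul_le _ _) (norm_nonneg _)
          _ ≤ a * Y * a := by
              apply mul_le_mul _ hUnorm (norm_nonneg _) (by positivity)
              exact mul_le_mul hUHnorm le_rfl hYnn (by linarith)
          _ = a ^ 2 * Y := by ring
      have hvX : δ⁻¹ * ‖v'‖ ≤ X := by
        have h1 : δ⁻¹ • v' = (δ⁻¹ • S).toBlocks₁₂ := by
          ext i j
          simp [hv', Matrix.toBlocks₁₂]
        have h2 : ‖δ⁻¹ • v'‖ = δ⁻¹ * ‖v'‖ := by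
          rw [norm_smul, Real.norm_eq_abs, abs_of_pos (inv_pos.mpr hδ)]
        rw [← h2, h1]
        exact norm_toBlocks₁₂_le _
      have hDX : ‖δ⁻¹ • D‖ ≤ X := by
        have h1 : δ⁻¹ • D = (δ⁻¹ • S).toBlocks₂₂ := by
          ext i j
          simp [hD, Matrix.toBlocks₂₂]
        rw [h1]
        exact norm_toBlocks₂₂_le _
      -- arithmetic assembly
      have hKX : K ≤ C' * (1 + X ^ n) := by
        rw [hK]
        have := pow_le_pow_left₀ (norm_nonneg _) hDX n
        nlinarith
      have harith : 1 + K + 2 / δ * ‖v'‖ * K ≤ (1 + 6 * C') * (1 + X ^ (n + 1)) := by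
        have hXn : X ^ n ≤ 1 + X ^ (n + 1) := pow_le_one_add_pow hXnn (by omega)
        have hX1 : X ≤ 1 + X ^ (n + 1) := by
          have := pow_le_one_add_pow hXnn (show 1 ≤ n + 1 by omega)
          simpa using this
        have hXn1 : X ^ (n + 1) ≤ 1 + X ^ (n + 1) := by nlinarith [pow_nonneg hXnn (n+1)]
        have h2v : 2 / δ * ‖v'‖ ≤ 2 * X := by
          have : 2 / δ * ‖v'‖ = 2 * (δ⁻¹ * ‖v'‖) := by ring
          rw [this]
          linarith
        have hKnn : 0 ≤ K := le_of_lt hKpos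
        have hC'X : K * (2 / δ * ‖v'‖) ≤ C' * (1 + X^n) * (2 * X) := by
          apply mul_le_mul hKX h2v (by positivity) (by positivity)
        -- expand
        have hexp1 : C' * (1 + X ^ n) * (2 * X) = 2*C'*X + 2*C'*(X^n*X) := by ring
        have hXnX : X ^ n * X = X ^ (n+1) := by rw [← pow_succ]
        have hfin : 1 + K + 2 / δ * ‖v'‖ * K ≤
            1 + C' * (1 + X^n) + (2*C'*X + 2*C'*X^(n+1)) := by
          have := hC'X
          rw [hexp1, hXnX] at this
          nlinarith
        refine hfin.trans ?_
        nlinarith [hXn, hX1, hXn1, hC'pos.le, pow_nonneg hXnn (n+1)]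
      have hpowXY : 1 + X ^ (n + 1) ≤ (a ^ 2) ^ (n + 1) * (1 + Y ^ (n + 1)) := by
        have h1 : X ^ (n+1) ≤ (a^2 * Y)^(n+1) := pow_le_pow_left₀ hXnn hXY (n+1)
        have h2 : (a^2*Y)^(n+1) = (a^2)^(n+1) * Y^(n+1) := mul_pow _ _ _
        have h3 : (1:ℝ) ≤ (a^2)^(n+1) := one_le_pow₀ (by nlinarith)
        nlinarith [pow_nonneg hYnn (n+1)]
      -- final chain
      calc ‖exp ((-t) • B)‖ = ‖U * exp ((-t) • T) * Uᴴ‖ := by rw [hBexp]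
        _ ≤ ‖U * exp ((-t) • T)‖ * ‖Uᴴ‖ := norm_mul_le _ _
        _ ≤ ‖U‖ * ‖exp ((-t) • T)‖ * ‖Uᴴ‖ :=
            mul_le_mul_of_nonneg_right (norm_mul_le _ _) (norm_nonneg _)
        _ ≤ a * ‖exp ((-t) • T)‖ * a := by
            have hTn : 0 ≤ ‖exp ((-t) • T)‖ := norm_nonneg _
            apply mul_le_mul _ hUHnorm (norm_nonneg _) (by positivity)
            exact mul_le_mul hUnorm le_rfl hTn (by linarith)
        _ = a ^ 2 * ‖exp ((-t) • S)‖ := by rw [hnormexpTS]; ring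
        _ ≤ a ^ 2 * ((1 + K + 2 / δ * ‖v'‖ * K) * Real.exp (-δ * t / 2)) := by
            apply mul_le_mul_of_nonneg_left hSnorm (by positivity)
        _ ≤ a ^ 2 * (((1 + 6 * C') * (1 + X ^ (n + 1))) * Real.exp (-δ * t / 2)) := by
            apply mul_le_mul_of_nonneg_left _ (by positivity)
            exact mul_le_mul_of_nonneg_right harith (Real.exp_nonneg _)
        _ ≤ a ^ 2 * (((1 + 6 * C') * ((a ^ 2) ^ (n + 1) * (1 + Y ^ (n + 1)))) *
              Real.exp (-δ * t / 2)) := by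
            apply mul_le_mul_of_nonneg_left _ (by positivity)
            apply mul_le_mul_of_nonneg_right _ (Real.exp_nonneg _)
            apply mul_le_mul_of_nonneg_left hpowXY (by positivity)
        _ = a ^ 2 * (1 + 6 * C') * (a ^ 2) ^ (n + 1) * (1 + Y ^ (n + 1)) *
              Real.exp (-δ * t / 2) := by ring

end ExpAux

end AuxDevelopment

/-- If every eigenvalue of `B ∈ M_N(ℂ)` has real part at least `δ > 0`,
then `‖e^{-tB}‖ ≤ C (1 + ‖B/δ‖^N) e^{-δ t / 2}` for all `t ≥ 0`, where the constant `C`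
depends only on `N` (and the chosen norm). -/
theorem exp_neg_smul_norm_le_of_spectrum_re_ge (N : ℕ) :
    ∃ C : ℝ, 0 < C ∧
      ∀ (δ : ℝ), 0 < δ →
        ∀ B : Matrix (Fin N) (Fin N) ℂ,
          (∀ z ∈ spectrum ℂ B, δ ≤ z.re) →
            ∀ t : ℝ, 0 ≤ t →
              ‖NormedSpace.exp ((-t) • B)‖ ≤
                C * (1 + ‖δ⁻¹ • B‖ ^ N) * Real.exp (-δ * t / 2) := by
  exact ExpAux.mainInd N (Fin N) inferInstance inferInstance (Fintype.card_fin N)
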